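/- Let β ≥ 1 and N ∈ ℕ with N ≥ 1, and define the graded mesh points x_k = (k/N)^β for k = 0, …, N. Then for every k ≥ 2 and every x ∈ [x_{k-1}, x_k], the mesh width h_k = x_k − x_{k-1} satisfies h_k ≤ β · 2^{β·γ̃} · (1/N) · x^{γ̃}, where γ̃ = 1 − 1/β. -/

import Mathlib

open Real

/-- Graded-mesh width estimate: for the β-graded mesh x_k = (k/N)^β with β ≥ 1,
for k ≥ 2 and x ∈ [x_{k-1}, x_k] the local mesh width h_k = x_k - x_{k-1} satisfies
h_k ≤ β · 2^{β γ̃} · (1/N) · x^{γ̃} with γ̃ = 1 - 1/β. -/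
theorem stmt_2 (β : ℝ) (hβ : 1 ≤ β) (N : ℕ) (hN : 1 ≤ N) (k : ℕ) (hk : 2 ≤ k)
    (hkN : k ≤ N) (x : ℝ)
    (hx₁ : (((k:ℝ) - 1)/N) ^ β ≤ x) (hx₂ : x ≤ ((k:ℝ)/N) ^ β) :
    ((k:ℝ)/N) ^ β - (((k:ℝ) - 1)/N) ^ β ≤
      β * 2 ^ (β * (1 - 1/β)) * (1/N) * x ^ (1 - 1/β) := by
  have hNpos : (0:ℝ) < N := by exact_mod_cast hN
  have hk2 : (2:ℝ) ≤ (k:ℝ) := by exact_mod_cast hk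
  have hβ0 : (0:ℝ) < β := by linarith
  set γ : ℝ := 1 - 1/β with hγ
  have hγ0 : 0 ≤ γ := sub_nonneg.mpr ((div_le_one hβ0).mpr hβ)
  set a : ℝ := (k:ℝ)/N with ha
  set b : ℝ := ((k:ℝ) - 1)/N with hb
  have hbpos : 0 < b := by apply div_pos _ hNpos; linarith
  have hba : b < a := by
    apply div_lt_div_of_pos_right (by linarith) hNpos
  have hapos : 0 < a := hbpos.trans hba
  have hab : a - b = 1/N := by
    rw [ha, hb]; ring
  -- MVT step
  have hcont : ContinuousOn (fun y : ℝ => y ^ β) (Set.Icc b a) := by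
    intro y hy
    exact (Real.continuousAt_rpow_const y β (Or.inl (by nlinarith [hy.1]))).continuousWithinAt
  have hderiv : ∀ y ∈ Set.Ioo b a, HasDerivAt (fun y : ℝ => y ^ β)
      (β * y ^ (β - 1)) y := by
    intro y hy
    exact Real.hasDerivAt_rpow_const (Or.inl (by nlinarith [hy.1]))
  obtain ⟨c, hc, hceq⟩ := exists_hasDerivAt_eq_slope (fun y : ℝ => y ^ β)
    (fun y => β * y ^ (β - 1)) hba hcont hderiv
  have hcpos : 0 < c := hbpos.trans hc.1
  have hmvt : a ^ β - b ^ β = β * c ^ (β - 1) * (a - b) := by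
    rw [hceq, div_mul_cancel₀ _ (sub_ne_zero.mpr hba.ne')]
  -- c^(β-1) ≤ a^(β-1)
  have hstep1 : a ^ β - b ^ β ≤ β * a ^ (β - 1) * (1/N) := by
    rw [hmvt, hab]
    have h := Real.rpow_le_rpow hcpos.le hc.2.le (by linarith : (0:ℝ) ≤ β - 1)
    have hN' : (0:ℝ) ≤ 1/N := by positivity
    exact mul_le_mul_of_nonneg_right (mul_le_mul_of_nonneg_left h hβ0.le) hN'
  -- a^(β-1) = (a^β)^γ
  have haβγ : a ^ (β - 1) = (a ^ β) ^ γ := by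
    rw [← Real.rpow_mul hapos.le]
    congr 1
    rw [hγ, mul_sub, mul_one, mul_one_div_cancel hβ0.ne']
  -- a ≤ 2 * b
  have ha2b : a ≤ 2 * b := by
    rw [ha, hb]
    rw [div_le_iff₀ hNpos]
    have : 2 * (((k:ℝ) - 1)/N) * N = 2 * ((k:ℝ) - 1) := by field_simp
    rw [this]; linarith
  -- (a^β)^γ ≤ 2^(βγ) * x^γ
  have hstep2 : (a ^ β) ^ γ ≤ 2 ^ (β * γ) * x ^ γ := by
    have h1 : a ^ β ≤ (2 * b) ^ β := Real.rpow_le_rpow hapos.le ha2b hβ0.le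
    have h2 : (2 * b) ^ β = 2 ^ β * b ^ β :=
      Real.mul_rpow (by norm_num) hbpos.le
    have h3 : (a ^ β) ^ γ ≤ (2 ^ β * b ^ β) ^ γ := by
      apply Real.rpow_le_rpow (Real.rpow_nonneg hapos.le β) (by rw [← h2]; exact h1) hγ0
    have h4 : (2 ^ β * b ^ β : ℝ) ^ γ = (2:ℝ) ^ (β * γ) * (b ^ β) ^ γ := by
      rw [Real.mul_rpow (Real.rpow_nonneg (by norm_num) β) (Real.rpow_nonneg hbpos.le β),
        ← Real.rpow_mul (by norm_num)]
    have h5 : (b ^ β) ^ γ ≤ x ^ γ :=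
      Real.rpow_le_rpow (Real.rpow_nonneg hbpos.le β) hx₁ hγ0
    calc (a ^ β) ^ γ ≤ (2 ^ β * b ^ β) ^ γ := h3
      _ = 2 ^ (β * γ) * (b ^ β) ^ γ := h4
      _ ≤ 2 ^ (β * γ) * x ^ γ :=
          mul_le_mul_of_nonneg_left h5 (Real.rpow_nonneg (by norm_num) _)
  calc a ^ β - b ^ β ≤ β * a ^ (β - 1) * (1/N) := hstep1
    _ = β * (a ^ β) ^ γ * (1/N) := by rw [haβγ]
    _ ≤ β * (2 ^ (β * γ) * x ^ γ) * (1/N) := by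
        have hN' : (0:ℝ) ≤ 1/N := by positivity
        exact mul_le_mul_of_nonneg_right (mul_le_mul_of_nonneg_left hstep2 hβ0.le) hN'
    _ = β * 2 ^ (β * γ) * (1/N) * x ^ γ := by ring
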